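/- For a connected graph G of order n ≥ 2 and k ∈ {1,2} with k ≤ 𝔡(G), pd_k(G) = n if and only if 𝔡*(G) ≤ k + 1. -/

import Mathlib

set_option linter.unusedSectionVars false
set_option linter.unusedVariables false
set_option maxHeartbeats 1000000


open SimpleGraph Finset

/-- Distance from a vertex to a finite set of vertices:
`min_{w ∈ S} d(u, w)`. -/
noncomputable def setDist {V : Type*} (G : SimpleGraph V) (u : V) (S : Finset V) : ℕ :=
  sInf (G.dist u '' (S : Set V))

/-- The set `𝒟_G(x,y)` of vertices distinguishing `x` and `y`. -/
noncomputable def DG {V : Type*} (G : SimpleGraph V) [Fintype V] (x y : V) : Finset V :=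
  Finset.univ.filter fun z => G.dist z x ≠ G.dist z y

/-- `𝔡(G) = min_{x ≠ y} |𝒟_G(x,y)|`. -/
noncomputable def frakd {V : Type*} (G : SimpleGraph V) [Fintype V] : ℕ :=
  sInf {m | ∃ x y : V, x ≠ y ∧ (DG G x y).card = m}

/-- `𝔡*(G) = max_{x ≠ y} |𝒟_G(x,y)|`. -/
noncomputable def frakdStar {V : Type*} (G : SimpleGraph V) [Fintype V] : ℕ :=
  sSup {m | ∃ x y : V, x ≠ y ∧ (DG G x y).card = m}

/-- A partition of the vertex set is a `k`-partition generator if every pair of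
distinct vertices is distinguished by at least `k` parts. -/
noncomputable def IsKPartitionGenerator {V : Type*} (G : SimpleGraph V) [Fintype V]
    [DecidableEq V] (k : ℕ) (P : Finpartition (Finset.univ : Finset V)) : Prop :=
  ∀ u v : V, u ≠ v → k ≤ (P.parts.filter fun S => setDist G u S ≠ setDist G v S).card

/-- The `k`-partition dimension `pd_k(G)`. -/
noncomputable def pd {V : Type*} (G : SimpleGraph V) [Fintype V] [DecidableEq V] (k : ℕ) : ℕ :=
  sInf {m | ∃ P : Finpartition (Finset.univ : Finset V),
    IsKPartitionGenerator G k P ∧ P.parts.card = m}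

/-- A set of vertices is a `k`-metric generator if every pair of distinct
vertices is distinguished by at least `k` of its vertices. -/
def IsKMetricGenerator {V : Type*} (G : SimpleGraph V) [Fintype V] (k : ℕ) (W : Finset V) : Prop :=
  ∀ u v : V, u ≠ v → k ≤ (W.filter fun z => G.dist z u ≠ G.dist z v).card

/-- The `k`-metric dimension `dim_k(G)`. -/
noncomputable def metricDim {V : Type*} (G : SimpleGraph V) [Fintype V] (k : ℕ) : ℕ :=
  sInf {m | ∃ W : Finset V, IsKMetricGenerator G k W ∧ W.card = m}

section Aux
variable {V : Type*} [Fintype V] [DecidableEq V] {G : SimpleGraph V}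

lemma setDist_singleton (G : SimpleGraph V) (u z : V) : setDist G u {z} = G.dist u z := by
  simp [setDist]

lemma setDist_eq_zero_of_mem {u : V} {S : Finset V} (hu : u ∈ S) : setDist G u S = 0 := by
  apply Nat.sInf_eq_zero.mpr
  left
  exact ⟨u, by simpa using hu, SimpleGraph.dist_self⟩

lemma setDist_ne_zero (hG : G.Connected) {u : V} {S : Finset V} (hu : u ∉ S)
    (hS : S.Nonempty) : setDist G u S ≠ 0 := by
  intro h
  rcases Nat.sInf_eq_zero.mp h with ⟨w, hw, hdw⟩ | hemp
  · simp only [Finset.mem_coe] at hw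
    exact hu (((hG.dist_eq_zero_iff).mp hdw) ▸ hw)
  · obtain ⟨a, ha⟩ := hS
    exact absurd hemp (Set.nonempty_iff_ne_empty.mp ⟨G.dist u a, ⟨a, by simpa using ha, rfl⟩⟩)

lemma exists_mem_of_setDist_ne {u v : V} {S : Finset V}
    (h : setDist G u S ≠ setDist G v S) : ∃ z ∈ S, G.dist z u ≠ G.dist z v := by
  by_contra hc
  push_neg at hc
  apply h
  unfold setDist
  congr 1
  ext n
  constructor
  · rintro ⟨z, hz, rfl⟩
    refine ⟨z, hz, ?_⟩
    rw [show G.dist v z = G.dist z v from SimpleGraph.dist_comm,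
      show G.dist u z = G.dist z u from SimpleGraph.dist_comm]
    exact (hc z (by simpa using hz)).symm
  · rintro ⟨z, hz, rfl⟩
    refine ⟨z, hz, ?_⟩
    rw [show G.dist u z = G.dist z u from SimpleGraph.dist_comm,
      show G.dist v z = G.dist z v from SimpleGraph.dist_comm]
    exact hc z (by simpa using hz)

lemma mem_DG {x y z : V} : z ∈ DG G x y ↔ G.dist z x ≠ G.dist z y := by
  simp [DG]

lemma self_mem_DG_left (hG : G.Connected) {x y : V} (hxy : x ≠ y) : x ∈ DG G x y := by
  rw [mem_DG, SimpleGraph.dist_self]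
  exact (hG.pos_dist_of_ne hxy).ne

lemma self_mem_DG_right (hG : G.Connected) {x y : V} (hxy : x ≠ y) : y ∈ DG G x y := by
  rw [mem_DG, SimpleGraph.dist_self]
  exact (hG.pos_dist_of_ne hxy.symm).ne'

lemma DG_symm (x y : V) : DG G y x = DG G x y := by
  ext z; simp [DG, ne_comm]

/-- The discrete partition is a k-partition generator when `k ≤ frakd G`. -/
lemma bot_generator {k : ℕ} (hk' : k ≤ frakd G) :
    IsKPartitionGenerator G k (⊥ : Finpartition (Finset.univ : Finset V)) := by
  intro u v huv
  have h1 : frakd G ≤ (DG G u v).card := Nat.sInf_le ⟨u, v, huv, rfl⟩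
  refine le_trans (le_trans hk' h1) ?_
  apply Finset.card_le_card_of_injOn (fun z => ({z} : Finset V))
  · intro z hz
    rw [Finset.mem_coe, Finset.mem_filter]
    constructor
    · rw [Finpartition.parts_bot, Finset.mem_map]
      exact ⟨z, Finset.mem_univ z, rfl⟩
    · rw [setDist_singleton, setDist_singleton,
        show G.dist u z = G.dist z u from SimpleGraph.dist_comm,
        show G.dist v z = G.dist z v from SimpleGraph.dist_comm]
      exact mem_DG.mp hz
  · intro a _ b _ h
    exact Finset.singleton_injective h

lemma frakdStar_bddAbove :
    BddAbove {m | ∃ x y : V, x ≠ y ∧ (DG G x y).card = m} := by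
  refine ⟨Fintype.card V, ?_⟩
  rintro m ⟨x, y, -, rfl⟩
  simpa using Finset.card_le_univ (DG G x y)

/-- If some part has two elements, the number of distinguishing parts is small. -/
lemma filter_card_le (hG : G.Connected) (P : Finpartition (Finset.univ : Finset V))
    {a b : V} (hab : a ≠ b) {A : Finset V} (hA : A ∈ P.parts) (haA : a ∈ A) (hbA : b ∈ A) :
    (P.parts.filter fun S => setDist G a S ≠ setDist G b S).card
      ≤ ((DG G a b) \ {a, b}).card := by
  classical
  set F := P.parts.filter fun S => setDist G a S ≠ setDist G b S with hF
  have hwit : ∀ S : Finset V, ∃ z, S ∈ F → (z ∈ DG G a b \ {a, b} ∧ z ∈ S) := by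
    intro S
    by_cases hS : S ∈ F
    · obtain ⟨hSP, hSd⟩ := Finset.mem_filter.mp hS
      obtain ⟨z, hzS, hz⟩ := exists_mem_of_setDist_ne hSd
      have hSA : S ≠ A := by
        rintro rfl
        exact hSd (by rw [setDist_eq_zero_of_mem haA, setDist_eq_zero_of_mem hbA])
      have hdisj : Disjoint S A := P.supIndep.pairwiseDisjoint hSP hA hSA
      refine ⟨z, fun _ => ⟨?_, hzS⟩⟩
      rw [Finset.mem_sdiff]
      refine ⟨mem_DG.mpr hz, ?_⟩
      intro hzab
      rcases Finset.mem_insert.mp hzab with rfl | hzb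
      · exact (Finset.disjoint_left.mp hdisj hzS) haA
      · rw [Finset.mem_singleton] at hzb
        subst hzb
        exact (Finset.disjoint_left.mp hdisj hzS) hbA
    · exact ⟨a, fun h => absurd h hS⟩
  choose f hf using hwit
  apply Finset.card_le_card_of_injOn f (fun S hS => (hf S hS).1)
  intro S hS T hT hST
  by_contra hne
  have hdisj : Disjoint S T :=
    P.supIndep.pairwiseDisjoint (Finset.mem_filter.mp hS).1 (Finset.mem_filter.mp hT).1 hne
  exact (Finset.disjoint_left.mp hdisj (hf S hS).2) (hST ▸ (hf T hT).2)

/-- If `frakdStar G ≤ k + 1` then every k-partition generator has `n` parts. -/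
lemma generator_card (hG : G.Connected) {k : ℕ} (hk1 : 1 ≤ k)
    (hstar : frakdStar G ≤ k + 1) {P : Finpartition (Finset.univ : Finset V)}
    (hP : IsKPartitionGenerator G k P) : P.parts.card = Fintype.card V := by
  have hone : ∀ A ∈ P.parts, A.card = 1 := by
    intro A hA
    by_contra hcard
    have h1 : 1 ≤ A.card := Finset.card_pos.mpr (P.nonempty_of_mem_parts hA)
    have h2 : 1 < A.card := lt_of_le_of_ne h1 (Ne.symm hcard)
    obtain ⟨a, haA, b, hbA, hab⟩ := Finset.one_lt_card.mp h2
    have hD : (DG G a b).card ≤ k + 1 :=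
      le_trans (le_csSup frakdStar_bddAbove ⟨a, b, hab, rfl⟩) hstar
    have hsub : ({a, b} : Finset V) ⊆ DG G a b := by
      intro z hz
      rcases Finset.mem_insert.mp hz with rfl | hz
      · exact self_mem_DG_left hG hab
      · rw [Finset.mem_singleton] at hz
        subst hz
        exact self_mem_DG_right hG hab
    have hsd : ((DG G a b) \ {a, b}).card = (DG G a b).card - 2 := by
      rw [Finset.card_sdiff_of_subset hsub, Finset.card_pair hab]
    have hmain := le_trans (hP a b hab) (filter_card_le hG P hab hA haA hbA)
    omega
  have hsum := P.sum_card_parts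
  rw [Finset.sum_congr rfl hone, Finset.sum_const, smul_eq_mul, mul_one,
    Finset.card_univ] at hsum
  exact hsum

variable (V) in
/-- The partition merging `x` and `y` into one part. -/
noncomputable def mergedP (x y : V) (hxy : x ≠ y) :
    Finpartition (Finset.univ : Finset V) where
  parts := insert {x, y} ((Finset.univ \ {x, y}).image fun v => ({v} : Finset V))
  supIndep := by
    rw [Finset.supIndep_iff_pairwiseDisjoint]
    intro S hS T hT hST
    simp only [Finset.coe_insert, Set.mem_insert_iff, Finset.coe_image, Set.mem_image,
      Finset.mem_coe, Finset.mem_sdiff, Finset.mem_univ, Finset.mem_insert,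
      Finset.mem_singleton, true_and] at hS hT
    rcases hS with rfl | ⟨v, hv, rfl⟩ <;> rcases hT with rfl | ⟨w, hw, rfl⟩
    · exact absurd rfl hST
    · show Disjoint ({x, y} : Finset V) {w}
      rw [Finset.disjoint_singleton_right]
      simp only [Finset.mem_insert, Finset.mem_singleton]
      tauto
    · show Disjoint ({v} : Finset V) {x, y}
      rw [Finset.disjoint_singleton_left]
      simp only [Finset.mem_insert, Finset.mem_singleton]
      tauto
    · show Disjoint ({v} : Finset V) {w}
      rw [Finset.disjoint_singleton_left, Finset.mem_singleton]
      intro h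
      exact hST (by rw [h])
  sup_parts := by
    ext w
    simp only [Finset.mem_sup, Finset.mem_univ, iff_true, id]
    by_cases hw : w ∈ ({x, y} : Finset V)
    · exact ⟨{x, y}, Finset.mem_insert_self _ _, hw⟩
    · exact ⟨{w}, Finset.mem_insert_of_mem
        (Finset.mem_image_of_mem _ (by simp_all)), Finset.mem_singleton_self w⟩
  bot_notMem := by
    simp only [Finset.bot_eq_empty, Finset.mem_insert, Finset.mem_image]
    push_neg
    constructor
    · intro h
      exact (Finset.insert_ne_empty x {y}) h.symm
    · intro v _
      exact Finset.singleton_nonempty v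

lemma mergedP_parts (x y : V) (hxy : x ≠ y) :
    (mergedP V x y hxy).parts
      = insert {x, y} ((Finset.univ \ {x, y}).image fun v => ({v} : Finset V)) := rfl

lemma mergedP_card (x y : V) (hxy : x ≠ y) (hn : 2 ≤ Fintype.card V) :
    (mergedP V x y hxy).parts.card = Fintype.card V - 1 := by
  rw [mergedP_parts]
  have hnot : ({x, y} : Finset V) ∉ (Finset.univ \ {x, y}).image fun v => ({v} : Finset V) := by
    rw [Finset.mem_image]
    rintro ⟨v, -, hv⟩
    have := congrArg Finset.card hv
    rw [Finset.card_singleton, Finset.card_pair hxy] at this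
    omega
  rw [Finset.card_insert_of_notMem hnot,
    Finset.card_image_of_injective _ Finset.singleton_injective,
    Finset.card_sdiff_of_subset (Finset.subset_univ _), Finset.card_pair hxy, Finset.card_univ]
  omega

end Aux

section Main
variable {V : Type*} [Fintype V] [DecidableEq V] {G : SimpleGraph V}

lemma merged_two (hG : G.Connected) {x y u v : V} (hxy : x ≠ y) (huv : u ≠ v)
    (hu : u ∈ ({x, y} : Finset V)) (hv : v ∉ ({x, y} : Finset V)) :
    2 ≤ ((mergedP V x y hxy).parts.filter fun S => setDist G u S ≠ setDist G v S).card := by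
  have h1 : ({v} : Finset V) ∈ (mergedP V x y hxy).parts := by
    rw [mergedP_parts]
    exact Finset.mem_insert_of_mem (Finset.mem_image_of_mem _ (by simp [Finset.mem_sdiff, hv]))
  have h2 : ({x, y} : Finset V) ∈ (mergedP V x y hxy).parts := by
    rw [mergedP_parts]; exact Finset.mem_insert_self _ _
  have hp1 : setDist G u {v} ≠ setDist G v {v} := by
    rw [setDist_singleton, setDist_eq_zero_of_mem (Finset.mem_singleton_self v)]
    exact (hG.pos_dist_of_ne huv).ne'
  have hp2 : setDist G u {x, y} ≠ setDist G v {x, y} := by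
    rw [setDist_eq_zero_of_mem hu]
    exact (setDist_ne_zero hG hv ⟨x, Finset.mem_insert_self x {y}⟩).symm
  have hne : ({v} : Finset V) ≠ {x, y} := by
    intro h
    exact hv (h ▸ Finset.mem_singleton_self v)
  have hsub : ({({v} : Finset V), ({x, y} : Finset V)} : Finset (Finset V))
      ⊆ (mergedP V x y hxy).parts.filter fun S => setDist G u S ≠ setDist G v S := by
    intro S hS
    rcases Finset.mem_insert.mp hS with rfl | hS
    · exact Finset.mem_filter.mpr ⟨h1, hp1⟩
    · rw [Finset.mem_singleton] at hS; subst hS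
      exact Finset.mem_filter.mpr ⟨h2, hp2⟩
  calc 2 = ({({v} : Finset V), ({x, y} : Finset V)} : Finset (Finset V)).card :=
        (Finset.card_pair hne).symm
    _ ≤ _ := Finset.card_le_card hsub

lemma merged_generator (hG : G.Connected) {k : ℕ} (hk1 : 1 ≤ k) (hk2 : k ≤ 2) {x y : V}
    (hxy : x ≠ y) (hcard : k + 2 ≤ (DG G x y).card) :
    IsKPartitionGenerator G k (mergedP V x y hxy) := by
  intro u v huv
  by_cases hu : u ∈ ({x, y} : Finset V) <;> by_cases hv : v ∈ ({x, y} : Finset V)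
  · -- both in {x,y}
    have hDuv : k + 2 ≤ (DG G u v).card := by
      simp only [Finset.mem_insert, Finset.mem_singleton] at hu hv
      rcases hu with rfl | rfl <;> rcases hv with rfl | rfl
      · exact absurd rfl huv
      · exact hcard
      · rw [DG_symm]; exact hcard
      · exact absurd rfl huv
    have hsub : ({u, v} : Finset V) ⊆ DG G u v := by
      intro z hz
      rcases Finset.mem_insert.mp hz with rfl | hz
      · exact self_mem_DG_left hG huv
      · rw [Finset.mem_singleton] at hz; subst hz
        exact self_mem_DG_right hG huv
    have hsd : k ≤ ((DG G u v) \ {u, v}).card := by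
      rw [Finset.card_sdiff_of_subset hsub, Finset.card_pair huv]; omega
    refine le_trans hsd ?_
    apply Finset.card_le_card_of_injOn (fun z => ({z} : Finset V))
    · intro z hz
      rw [Finset.mem_coe, Finset.mem_sdiff] at hz
      obtain ⟨hz1, hz2⟩ := hz
      rw [Finset.mem_coe, Finset.mem_filter]
      constructor
      · rw [mergedP_parts]
        apply Finset.mem_insert_of_mem
        apply Finset.mem_image_of_mem
        rw [Finset.mem_sdiff]
        refine ⟨Finset.mem_univ z, ?_⟩
        simp only [Finset.mem_insert, Finset.mem_singleton] at hu hv hz2 ⊢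
        rcases hu with rfl | rfl <;> rcases hv with rfl | rfl <;> tauto
      · rw [setDist_singleton, setDist_singleton,
          show G.dist u z = G.dist z u from SimpleGraph.dist_comm,
          show G.dist v z = G.dist z v from SimpleGraph.dist_comm]
        exact mem_DG.mp hz1
    · intro a _ b _ h
      exact Finset.singleton_injective h
  · exact le_trans hk2 (merged_two hG hxy huv hu hv)
  · have hfe : ((mergedP V x y hxy).parts.filter fun S => setDist G u S ≠ setDist G v S)
        = (mergedP V x y hxy).parts.filter fun S => setDist G v S ≠ setDist G u S := by
      apply Finset.filter_congr
      intro S _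
      simp [ne_comm]
    rw [hfe]
    exact le_trans hk2 (merged_two hG hxy huv.symm hv hu)
  · -- both outside {x,y}
    have h1 : ({u} : Finset V) ∈ (mergedP V x y hxy).parts := by
      rw [mergedP_parts]
      exact Finset.mem_insert_of_mem (Finset.mem_image_of_mem _ (by simp [Finset.mem_sdiff, hu]))
    have h2 : ({v} : Finset V) ∈ (mergedP V x y hxy).parts := by
      rw [mergedP_parts]
      exact Finset.mem_insert_of_mem (Finset.mem_image_of_mem _ (by simp [Finset.mem_sdiff, hv]))
    have hp1 : setDist G u {u} ≠ setDist G v {u} := by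
      rw [setDist_eq_zero_of_mem (Finset.mem_singleton_self u), setDist_singleton]
      exact (hG.pos_dist_of_ne huv.symm).ne
    have hp2 : setDist G u {v} ≠ setDist G v {v} := by
      rw [setDist_singleton, setDist_eq_zero_of_mem (Finset.mem_singleton_self v)]
      exact (hG.pos_dist_of_ne huv).ne'
    have hne : ({u} : Finset V) ≠ {v} := fun h => huv (Finset.singleton_injective h)
    have hsub : ({({u} : Finset V), ({v} : Finset V)} : Finset (Finset V))
        ⊆ (mergedP V x y hxy).parts.filter fun S => setDist G u S ≠ setDist G v S := by
      intro S hS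
      rcases Finset.mem_insert.mp hS with rfl | hS
      · exact Finset.mem_filter.mpr ⟨h1, hp1⟩
      · rw [Finset.mem_singleton] at hS; subst hS
        exact Finset.mem_filter.mpr ⟨h2, hp2⟩
    refine le_trans hk2 ?_
    calc 2 = ({({u} : Finset V), ({v} : Finset V)} : Finset (Finset V)).card :=
          (Finset.card_pair hne).symm
      _ ≤ _ := Finset.card_le_card hsub

end Main

theorem stmt_16 {V : Type*} [Fintype V] [DecidableEq V] (G : SimpleGraph V)
    (hG : G.Connected) (hn : 2 ≤ Fintype.card V)
    (k : ℕ) (hk : k = 1 ∨ k = 2) (hk' : k ≤ frakd G) :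
    pd G k = Fintype.card V ↔ frakdStar G ≤ k + 1 := by
  classical
  have hk1 : 1 ≤ k := by rcases hk with rfl | rfl <;> norm_num
  have hk2 : k ≤ 2 := by rcases hk with rfl | rfl <;> norm_num
  constructor
  · intro hpd
    by_contra hstar
    push_neg at hstar
    have hTne : Set.Nonempty {m | ∃ x y : V, x ≠ y ∧ (DG G x y).card = m} := by
      obtain ⟨x, y, hxy⟩ := (Fintype.one_lt_card_iff (α := V)).mp (by omega)
      exact ⟨(DG G x y).card, x, y, hxy, rfl⟩
    have hTfin : Set.Finite {m | ∃ x y : V, x ≠ y ∧ (DG G x y).card = m} := by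
      apply Set.Finite.subset (Set.finite_Iic (Fintype.card V))
      rintro m ⟨x, y, -, rfl⟩
      simpa using Finset.card_le_univ (DG G x y)
    obtain ⟨x, y, hxy, hcard⟩ := Set.Nonempty.csSup_mem hTne hTfin
    have hcard' : k + 2 ≤ (DG G x y).card := by
      unfold frakdStar at hstar
      omega
    have hgen := merged_generator hG hk1 hk2 hxy hcard'
    have hle : pd G k ≤ Fintype.card V - 1 :=
      Nat.sInf_le ⟨_, hgen, mergedP_card x y hxy hn⟩
    omega
  · intro hstar
    have hne : Set.Nonempty {m | ∃ P : Finpartition (Finset.univ : Finset V),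
        IsKPartitionGenerator G k P ∧ P.parts.card = m} :=
      ⟨Fintype.card V, ⊥, bot_generator hk',
        by rw [Finpartition.card_bot, Finset.card_univ]⟩
    have hmem : pd G k ∈ {m | ∃ P : Finpartition (Finset.univ : Finset V),
        IsKPartitionGenerator G k P ∧ P.parts.card = m} := Nat.sInf_mem hne
    obtain ⟨P, hP, hPcard⟩ := hmem
    rw [← hPcard]
    exact generator_card hG hk1 hstar hP
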